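/- arXiv:1502.04336 — 9 statements merged into one kernel-verified Lean document; each statement's English description precedes it below -/
import Mathlib

section
/- Let I be a type and C a family of subsets of I that contains the whole set I and is closed under intersections of arbitrary nonempty subfamilies (a closure system on the power set of I). Then for all a, b ∈ C, the inclusion b ⊆ a holds if and only if the functional dependence a → b holds on the tuples indexed by C, i.e. if and only if for all c₁, c₂ ∈ C, a ∩ c₁ = a ∩ c₂ implies b ∩ c₁ = b ∩ c₂. -/
/-- Armstrong completeness for closure systems: for closed sets `a, b` of a closure
system `C` on the power set of `I`, inclusion `b ⊆ a` holds iff the functional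
dependence `a → b` holds on the tuples indexed by the closed sets, i.e. iff for all
`c₁, c₂ ∈ C`, `a ∩ c₁ = a ∩ c₂` implies `b ∩ c₁ = b ∩ c₂`. -/
theorem functional_dependence_iff_subset {I : Type*} (C : Set (Set I))
    (huniv : Set.univ ∈ C)
    (hinter : ∀ D ⊆ C, D.Nonempty → ⋂₀ D ∈ C)
    (a : Set I) (ha : a ∈ C) (b : Set I) (hb : b ∈ C) :
    b ⊆ a ↔ ∀ c₁ ∈ C, ∀ c₂ ∈ C, a ∩ c₁ = a ∩ c₂ → b ∩ c₁ = b ∩ c₂ := by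
  constructor
  · intro hba c₁ _ c₂ _ h
    have : b ∩ c₁ = b ∩ (a ∩ c₁) := by
      ext x; simp only [Set.mem_inter_iff]; tauto
    rw [this, h]
    ext x; simp only [Set.mem_inter_iff]; tauto
  · intro h
    have := h a ha Set.univ huniv (by simp)
    simpa using this
end

section
/- Let L be a lattice and h : L → ℝ a polymatroid function. Define the ternary relation I x y z ↔ h (x ⊔ z) + h (y ⊔ z) = h (x ⊔ y ⊔ z) + h z. Then I is a semi-graphoid relation, i.e. it satisfies existence (I x y x for all x, y), symmetry (I x y w implies I y x w), decomposition (I x (y ⊔ z) w implies I x z w), contraction (I x z w and I x y (z ⊔ w) imply I x (y ⊔ z) w), and weak union (I x (y ⊔ z) w implies I x y (z ⊔ w)). -/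
/-- The independence relation induced by a polymatroid function on a lattice is
semi-graphoid: it satisfies existence, symmetry, decomposition, contraction and
weak union. -/
theorem polymatroid_relation_semigraphoid {L : Type*} [Lattice L] (h : L → ℝ)
    (h0 : ∀ x, 0 ≤ h x)
    (hmono : ∀ x y, x ≤ y → h x ≤ h y)
    (hsub : ∀ x y, h (x ⊔ y) + h (x ⊓ y) ≤ h x + h y)
    (I : L → L → L → Prop)
    (hI : ∀ x y z, I x y z ↔ h (x ⊔ z) + h (y ⊔ z) = h (x ⊔ y ⊔ z) + h z) :
    (∀ x y, I x y x) ∧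
    (∀ x y w, I x y w → I y x w) ∧
    (∀ x y z w, I x (y ⊔ z) w → I x z w) ∧
    (∀ x y z w, I x z w → I x y (z ⊔ w) → I x (y ⊔ z) w) ∧
    (∀ x y z w, I x (y ⊔ z) w → I x y (z ⊔ w)) := by
  -- nonnegativity of the defect
  have hn : ∀ x y z : L, 0 ≤ h (x ⊔ z) + h (y ⊔ z) - (h (x ⊔ y ⊔ z) + h z) := by
    intro x y z
    have h1 := hsub (x ⊔ z) (y ⊔ z)
    have h2 : h z ≤ h ((x ⊔ z) ⊓ (y ⊔ z)) :=
      hmono _ _ (le_inf le_sup_right le_sup_right)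
    have h3 : (x ⊔ z) ⊔ (y ⊔ z) = x ⊔ y ⊔ z := by
      rw [sup_sup_sup_comm, sup_idem]
    rw [h3] at h1
    linarith
  -- chain identity
  have key : ∀ x y z w : L,
      h (x ⊔ w) + h (y ⊔ z ⊔ w) - (h (x ⊔ (y ⊔ z) ⊔ w) + h w) =
      (h (x ⊔ w) + h (z ⊔ w) - (h (x ⊔ z ⊔ w) + h w)) +
      (h (x ⊔ (z ⊔ w)) + h (y ⊔ (z ⊔ w)) - (h (x ⊔ y ⊔ (z ⊔ w)) + h (z ⊔ w))) := by
    intro x y z w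
    have e1 : x ⊔ (z ⊔ w) = x ⊔ z ⊔ w := (sup_assoc ..).symm
    have e2 : y ⊔ (z ⊔ w) = y ⊔ z ⊔ w := (sup_assoc ..).symm
    have e3 : x ⊔ y ⊔ (z ⊔ w) = x ⊔ (y ⊔ z) ⊔ w := by
      rw [← sup_assoc, sup_assoc x y z]
    rw [e1, e2, e3]; ring
  refine ⟨?_, ?_, ?_, ?_, ?_⟩
  · intro x y
    rw [hI]
    have : x ⊔ y ⊔ x = y ⊔ x := by
      rw [sup_comm x y, sup_assoc, sup_idem]
    rw [sup_idem, this]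
    ring
  · intro x y w hxy
    rw [hI] at hxy ⊢
    have : y ⊔ x ⊔ w = x ⊔ y ⊔ w := by rw [sup_comm y x]
    rw [this]; linarith
  · intro x y z w hd
    rw [hI] at hd ⊢
    have hk := key x y z w
    have h1 := hn x z w
    have h2 := hn x y (z ⊔ w)
    linarith
  · intro x y z w h1 h2
    rw [hI] at h1 h2 ⊢
    have hk := key x y z w
    linarith
  · intro x y z w hd
    rw [hI] at hd ⊢
    have hk := key x y z w
    have h1 := hn x z w
    have h2 := hn x y (z ⊔ w)
    linarith
end

section
/- Let L be a lattice with a semi-graphoid relation I, and define the binary relation r by r a b ↔ I b b a. Then r satisfies Armstrong's axioms: (reflexivity) b ≤ a implies r a b; (transitivity) r a b and r b c imply r a c; (augmentation) r a b implies r (a ⊔ z) (b ⊔ z) for every z. Moreover r satisfies decomposition (r z (x ⊔ y) implies r z x) and union (r z x and r z y imply r z (x ⊔ y)). -/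
/-- For a semi-graphoid relation `I` on a lattice, the relation `r a b ↔ I b b a`
satisfies Armstrong's axioms (reflexivity, transitivity, augmentation) as well as
decomposition and union. -/
theorem semigraphoid_functional_dependence_armstrong {L : Type*} [Lattice L]
    (I : L → L → L → Prop)
    (hex : ∀ x y, I x y x)
    (hsym : ∀ x y w, I x y w → I y x w)
    (hdec : ∀ x y z w, I x (y ⊔ z) w → I x z w)
    (hcon : ∀ x y z w, I x z w → I x y (z ⊔ w) → I x (y ⊔ z) w)
    (hwu : ∀ x y z w, I x (y ⊔ z) w → I x y (z ⊔ w))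
    (r : L → L → Prop) (hr : ∀ a b, r a b ↔ I b b a) :
    (∀ a b, b ≤ a → r a b) ∧
    (∀ a b c, r a b → r b c → r a c) ∧
    (∀ a b z, r a b → r (a ⊔ z) (b ⊔ z)) ∧
    (∀ x y z, r z (x ⊔ y) → r z x) ∧
    (∀ x y z, r z x → r z y → r z (x ⊔ y)) := by
  -- lemma A : I x y (w ⊔ x) always holds
  have lemA : ∀ x y w : L, I x y (w ⊔ x) := fun x y w => hwu x y w x (hex x (y ⊔ w))
  -- drop the left component of the second argument
  have hdec' : ∀ x y z w : L, I x (y ⊔ z) w → I x y w := by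
    intro x y z w h
    exact hdec x z y w (by rwa [sup_comm z y])
  -- raise the second argument
  have lemR : ∀ a s w : L, I a a w → I a (a ⊔ s) w := by
    intro a s w h
    have h2 : I a s (a ⊔ w) := by have := lemA a s w; rwa [sup_comm w a] at this
    have := hcon a s a w h h2
    rwa [sup_comm s a] at this
  -- raise the third argument
  have lemB : ∀ a s w : L, I a a w → I a a (s ⊔ w) := fun a s w h =>
    hwu a a s w (lemR a s w h)
  -- reflexivity
  have refl : ∀ a b : L, b ≤ a → I b b a := by
    intro a b hba
    have := lemB b a b (hex b b)
    rwa [sup_eq_left.mpr hba] at this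
  -- decomposition
  have dec : ∀ x y z : L, I (x ⊔ y) (x ⊔ y) z → I x x z := by
    intro x y z h
    have h1 : I (x ⊔ y) x z := hdec' (x ⊔ y) x y z h
    have h2 : I x (x ⊔ y) z := hsym (x ⊔ y) x z h1
    exact hdec' x x y z h2
  -- union
  have uni : ∀ x y z : L, I x x z → I y y z → I (x ⊔ y) (x ⊔ y) z := by
    intro x y z hx hy
    -- I (x⊔y) x z
    have h1 : I (x ⊔ y) x z := hsym x (x ⊔ y) z (lemR x y z hx)
    -- I y y (x ⊔ z)
    have h2 : I y y (x ⊔ z) := lemB y x z hy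
    -- I y (x⊔y) (x⊔z)
    have h3 : I y (y ⊔ (x ⊔ y)) (x ⊔ z) := lemR y (x ⊔ y) (x ⊔ z) h2
    rw [sup_comm y (x ⊔ y), sup_assoc, sup_idem] at h3
    have h4 : I (x ⊔ y) y (x ⊔ z) := hsym y (x ⊔ y) (x ⊔ z) h3
    have h5 := hcon (x ⊔ y) y x z h1 h4
    rwa [sup_comm y x] at h5
  -- transitivity
  have trans : ∀ a b c : L, I b b a → I c c b → I c c a := by
    intro a b c hab hbc
    have h1 : I b c (b ⊔ a) := by have := lemA b c a; rwa [sup_comm a b] at this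
    have h2 : I b (c ⊔ b) a := hcon b c b a hab h1
    have h3 : I b c a := hdec' b c b a h2
    have h4 : I c b a := hsym b c a h3
    have h5 : I c c (b ⊔ a) := by have := lemB c a b hbc; rwa [sup_comm a b] at this
    have h6 : I c (c ⊔ b) a := hcon c c b a h4 h5
    exact hdec' c c b a h6
  refine ⟨fun a b h => (hr a b).mpr (refl a b h),
    fun a b c h1 h2 => (hr a c).mpr (trans a b c ((hr a b).mp h1) ((hr b c).mp h2)),
    fun a b z h => ?_,
    fun x y z h => (hr z x).mpr (dec x y z ((hr z (x ⊔ y)).mp h)),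
    fun x y z h1 h2 => (hr z (x ⊔ y)).mpr (uni x y z ((hr z x).mp h1) ((hr z y).mp h2))⟩
  -- augmentation
  have hb : I b b (a ⊔ z) := by
    have := lemB b z a ((hr a b).mp h); rwa [sup_comm z a] at this
  have hz : I z z (a ⊔ z) := refl (a ⊔ z) z le_sup_right
  exact (hr (a ⊔ z) (b ⊔ z)).mpr (uni b z (a ⊔ z) hb hz)
end

section
/- Let L be a lattice with a semi-graphoid relation I. Then I satisfies base monotonicity: if I a b d and d ≤ c ≤ b, then I a b c. -/
/-- A semi-graphoid relation on a lattice satisfies base monotonicity: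
if `I a b d` and `d ≤ c ≤ b`, then `I a b c`. -/
theorem semigraphoid_base_monotonicity {L : Type*} [Lattice L]
    (I : L → L → L → Prop)
    (hex : ∀ x y, I x y x)
    (hsym : ∀ x y w, I x y w → I y x w)
    (hdec : ∀ x y z w, I x (y ⊔ z) w → I x z w)
    (hcon : ∀ x y z w, I x z w → I x y (z ⊔ w) → I x (y ⊔ z) w)
    (hwu : ∀ x y z w, I x (y ⊔ z) w → I x y (z ⊔ w)) :
    ∀ a b c d, I a b d → d ≤ c → c ≤ b → I a b c := by
  intro a b c d h hdc hcb
  have := hwu a b c d (by rwa [sup_eq_left.mpr hcb])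
  rwa [sup_eq_left.mpr hdc] at this
end

section
/- Let L be a finite lattice and h : L → ℝ a submodular function (h (a ⊔ b) + h (a ⊓ b) ≤ h a + h b for all a, b). Suppose h is increasing at every meet-irreducible element, i.e. for every meet-irreducible c ∈ L and every a with c ≤ a one has h c ≤ h a. Then h is monotone on all of L: x ≤ y implies h x ≤ h y. -/
/-- If a submodular function on a finite lattice is increasing at every
meet-irreducible element, then it is monotone on the whole lattice. -/
theorem submodular_increasing_on_meet_irreducible {L : Type*} [Lattice L]
    [Finite L] [OrderTop L] (h : L → ℝ)
    (hsub : ∀ a b, h (a ⊔ b) + h (a ⊓ b) ≤ h a + h b)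
    (hirr : ∀ c : L, c ≠ ⊤ → (∀ x y, c = x ⊓ y → c = x ∨ c = y) →
      ∀ a, c ≤ a → h c ≤ h a) :
    ∀ x y, x ≤ y → h x ≤ h y := by
  have wf : WellFoundedGT L := inferInstance
  intro x
  induction x using wf.wf.induction with
  | _ x IH =>
    -- IH : ∀ u, x < u → ∀ y, u ≤ y → h u ≤ h y
    -- First: the covering case
    have cover : ∀ y, x ⋖ y → h x ≤ h y := by
      intro y hxy
      by_cases htop : x = ⊤
      · exact absurd (htop ▸ hxy.lt) (by simp)
      by_cases hmi : ∀ a b, x = a ⊓ b → x = a ∨ x = b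
      · exact hirr x htop hmi y hxy.le
      · push_neg at hmi
        obtain ⟨u, v, huv, hu, hv⟩ := hmi
        -- not both u, v ≥ y
        have hor : ¬ (y ≤ u) ∨ ¬ (y ≤ v) := by
          by_contra hc
          push_neg at hc
          exact absurd (le_inf hc.1 hc.2) (by rw [← huv]; exact hxy.lt.not_ge)
        wlog hyu : ¬ y ≤ u generalizing u v
        · exact this v u (by rw [inf_comm] at huv; exact huv) hv hu hor.symm
            (hor.resolve_left (by tauto))
        have hxu : x < u := lt_of_le_of_ne (huv ▸ inf_le_left) hu
        have hxuy : u ⊓ y = x := by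
          rcases hxy.eq_or_eq (le_inf hxu.le hxy.le) inf_le_right with heq | heq
          · exact heq
          · exact absurd (heq ▸ inf_le_left) hyu
        have hsm := hsub u y
        rw [hxuy] at hsm
        have hu' : h u ≤ h (u ⊔ y) := IH u hxu (u ⊔ y) le_sup_left
        linarith only [hsm, hu']
    intro y hxy
    rcases eq_or_lt_of_le hxy with rfl | hlt
    · exact le_refl _
    · obtain ⟨z, hxz, hzy⟩ := hlt.exists_covby_le
      exact le_trans (cover z hxz) (IH z hxz.lt y hzy)
end

section
/- Let L be a finite modular lattice and h : L → ℝ a function such that the submodular inequality h (a ⊔ b) + h (a ⊓ b) ≤ h a + h b holds for every pair a, b for which a ⊓ b is covered by both a and b. Then h is submodular on all of L: h (a ⊔ b) + h (a ⊓ b) ≤ h a + h b for all a, b ∈ L. -/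
/-- In a finite modular lattice, a function satisfying the submodular inequality on
every pair `a, b` for which `a ⊓ b` is covered by both `a` and `b` is submodular
on the whole lattice. -/
theorem submodular_of_covering_pairs {L : Type*} [Lattice L] [Finite L]
    [IsModularLattice L] (h : L → ℝ)
    (hcov : ∀ a b : L, a ⊓ b ⋖ a → a ⊓ b ⋖ b → h (a ⊔ b) + h (a ⊓ b) ≤ h a + h b) :
    ∀ a b : L, h (a ⊔ b) + h (a ⊓ b) ≤ h a + h b := by
  have key : ∀ n : ℕ, ∀ a b : L,
      (Set.Icc (a ⊓ b) a).ncard + (Set.Icc (a ⊓ b) b).ncard ≤ n →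
      h (a ⊔ b) + h (a ⊓ b) ≤ h a + h b := by
    intro n
    induction n with
    | zero =>
      intro a b hn
      exfalso
      have h1 : 0 < (Set.Icc (a ⊓ b) a).ncard :=
        (Set.ncard_pos (Set.toFinite _)).mpr ⟨a ⊓ b, by simp⟩
      omega
    | succ n ih =>
      intro a b hn
      by_cases hab : a ≤ b
      · rw [inf_eq_left.mpr hab, sup_eq_right.mpr hab]
        exact le_of_eq (add_comm _ _)
      by_cases hba : b ≤ a
      · rw [inf_eq_right.mpr hba, sup_eq_left.mpr hba]
      have hia : a ⊓ b < a := inf_le_left.lt_of_ne (fun he => hab (he ▸ inf_le_right))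
      have hib : a ⊓ b < b := inf_le_right.lt_of_ne (fun he => hba (he ▸ inf_le_left))
      by_cases hca : a ⊓ b ⋖ a
      · by_cases hcb : a ⊓ b ⋖ b
        · exact hcov a b hca hcb
        · -- split on the b side: get a ⊓ b < c < b
          obtain ⟨c, hc1, hc2⟩ := exists_lt_lt_of_not_covBy hib hcb
          have e1 : a ⊓ c = a ⊓ b :=
            le_antisymm (inf_le_inf_left a hc2.le) (le_inf inf_le_left hc1.le)
          have e2 : (a ⊔ c) ⊓ b = c := by
            rw [sup_comm a c, sup_inf_assoc_of_le _ hc2.le, sup_eq_left.mpr hc1.le]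
          have e3 : (a ⊔ c) ⊔ b = a ⊔ b := by
            rw [sup_assoc, sup_eq_right.mpr hc2.le]
          have m1 : (Set.Icc (a ⊓ b) c).ncard < (Set.Icc (a ⊓ b) b).ncard := by
            refine Set.ncard_lt_ncard ⟨fun x hx => ⟨hx.1, hx.2.trans hc2.le⟩, ?_⟩
              (Set.toFinite _)
            intro hsub
            exact absurd (hsub ⟨inf_le_right, le_rfl⟩).2 hc2.not_ge
          have m2 : (Set.Icc c (a ⊔ c)).ncard = (Set.Icc (a ⊓ b) a).ncard := by
            rw [← e1, ← Nat.card_coe_set_eq, ← Nat.card_coe_set_eq]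
            exact (Nat.card_congr (infIccOrderIsoIccSup a c).toEquiv).symm
          have m3 : (Set.Icc c b).ncard < (Set.Icc (a ⊓ b) b).ncard := by
            refine Set.ncard_lt_ncard ⟨fun x hx => ⟨hc1.le.trans hx.1, hx.2⟩, ?_⟩
              (Set.toFinite _)
            intro hsub
            exact absurd (hsub ⟨le_rfl, inf_le_right⟩).1 hc1.not_ge
          have i1 := ih a c (by rw [e1]; omega)
          have i2 := ih (a ⊔ c) b (by rw [e2, m2]; omega)
          rw [e1] at i1
          rw [e2, e3] at i2
          linarith only [i1, i2]
      · -- split on the a side: get a ⊓ b < c < a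
        obtain ⟨c, hc1, hc2⟩ := exists_lt_lt_of_not_covBy hia hca
        have e1 : c ⊓ b = a ⊓ b :=
          le_antisymm (inf_le_inf_right b hc2.le) (le_inf hc1.le inf_le_right)
        have e2 : a ⊓ (c ⊔ b) = c := by
          rw [inf_comm, sup_inf_assoc_of_le _ hc2.le, inf_comm b a,
            sup_eq_left.mpr hc1.le]
        have e3 : a ⊔ (c ⊔ b) = a ⊔ b := by
          rw [← sup_assoc, sup_eq_left.mpr hc2.le]
        have m1 : (Set.Icc (a ⊓ b) c).ncard < (Set.Icc (a ⊓ b) a).ncard := by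
          refine Set.ncard_lt_ncard ⟨fun x hx => ⟨hx.1, hx.2.trans hc2.le⟩, ?_⟩
            (Set.toFinite _)
          intro hsub
          exact absurd (hsub ⟨inf_le_left, le_rfl⟩).2 hc2.not_ge
        have m2 : (Set.Icc c (c ⊔ b)).ncard = (Set.Icc (a ⊓ b) b).ncard := by
          rw [sup_comm c b, ← e1, inf_comm c b, ← Nat.card_coe_set_eq,
            ← Nat.card_coe_set_eq]
          exact (Nat.card_congr (infIccOrderIsoIccSup b c).toEquiv).symm
        have m3 : (Set.Icc c a).ncard < (Set.Icc (a ⊓ b) a).ncard := by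
          refine Set.ncard_lt_ncard ⟨fun x hx => ⟨hc1.le.trans hx.1, hx.2⟩, ?_⟩
            (Set.toFinite _)
          intro hsub
          exact absurd (hsub ⟨le_rfl, inf_le_left⟩).1 hc1.not_ge
        have i1 := ih c b (by rw [e1]; omega)
        have i2 := ih a (c ⊔ b) (by rw [e2, m2]; omega)
        rw [e1] at i1
        rw [e2, e3] at i2
        linarith only [i1, i2]
  intro a b
  exact key ((Set.Icc (a ⊓ b) a).ncard + (Set.Icc (a ⊓ b) b).ncard) a b le_rfl
end

section
/- Let L be a finite lattice and M ⊆ L a subset containing the top element and closed under meets (m, m' ∈ M imply m ⊓ m' ∈ M). For ℓ ∈ L let τ ℓ denote the least element of {m ∈ M | ℓ ≤ m} (which exists). Let h : L → ℝ satisfy, for all m, m' ∈ M: 0 ≤ h m; m ≤ m' implies h m ≤ h m'; and h (τ (m ⊔ m')) + h (m ⊓ m') ≤ h m + h m'. Then the function h̃ := h ∘ τ agrees with h on M, and h̃ is nonnegative, monotone, and submodular on L: h̃ (x ⊔ y) + h̃ (x ⊓ y) ≤ h̃ x + h̃ y for all x, y ∈ L. -/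
/-- Extension of a polymatroid function from a meet-closed subset `M` of a finite
lattice: if `τ ℓ` is the least element of `M` above `ℓ`, and `h` is nonnegative,
monotone and submodular on `M` (with joins computed via `τ`), then `h ∘ τ` agrees
with `h` on `M` and is nonnegative, monotone and submodular on all of `L`. -/
theorem polymatroid_extension_from_meet_semilattice {L : Type*} [Lattice L]
    [Finite L] [OrderTop L]
    (M : Set L) (htop : ⊤ ∈ M) (hmeet : ∀ m ∈ M, ∀ m' ∈ M, m ⊓ m' ∈ M)
    (τ : L → L) (hτ : ∀ ℓ : L, IsLeast {m | m ∈ M ∧ ℓ ≤ m} (τ ℓ))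
    (h : L → ℝ)
    (h0 : ∀ m ∈ M, 0 ≤ h m)
    (hmono : ∀ m ∈ M, ∀ m' ∈ M, m ≤ m' → h m ≤ h m')
    (hsub : ∀ m ∈ M, ∀ m' ∈ M, h (τ (m ⊔ m')) + h (m ⊓ m') ≤ h m + h m') :
    (∀ m ∈ M, h (τ m) = h m) ∧
    (∀ x, 0 ≤ h (τ x)) ∧
    (∀ x y, x ≤ y → h (τ x) ≤ h (τ y)) ∧
    (∀ x y, h (τ (x ⊔ y)) + h (τ (x ⊓ y)) ≤ h (τ x) + h (τ y)) := by

  have τmem : ∀ ℓ, τ ℓ ∈ M := fun ℓ => (hτ ℓ).1.1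
  have τle : ∀ ℓ, ℓ ≤ τ ℓ := fun ℓ => (hτ ℓ).1.2
  have τfix : ∀ m ∈ M, τ m = m := fun m hm =>
    le_antisymm ((hτ m).2 ⟨hm, le_rfl⟩) (τle m)
  have τmono : ∀ {x y : L}, x ≤ y → τ x ≤ τ y := fun {x y} hxy =>
    (hτ x).2 ⟨τmem y, hxy.trans (τle y)⟩
  refine ⟨fun m hm => by rw [τfix m hm], fun x => h0 _ (τmem x),
    fun x y hxy => hmono _ (τmem x) _ (τmem y) (τmono hxy), fun x y => ?_⟩
  have h1 : h (τ (x ⊔ y)) ≤ h (τ (τ x ⊔ τ y)) :=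
    hmono _ (τmem _) _ (τmem _) (τmono (sup_le_sup (τle x) (τle y)))
  have h2 : h (τ (x ⊓ y)) ≤ h (τ x ⊓ τ y) := by
    have hm : τ x ⊓ τ y ∈ M := hmeet _ (τmem x) _ (τmem y)
    have : τ (x ⊓ y) ≤ τ x ⊓ τ y :=
      (hτ (x ⊓ y)).2 ⟨hm, inf_le_inf (τle x) (τle y)⟩
    exact hmono _ (τmem _) _ hm this
  have h3 := hsub _ (τmem x) _ (τmem y)
  linarith
end

section
/- Let L be a lattice and h : L → ℝ a polymatroid function. Then the relation r defined by r x y ↔ h (x ⊔ y) = h x satisfies Armstrong's axioms: (reflexivity) y ≤ x implies r x y; (transitivity) r x y and r y z imply r x z; (augmentation) r x y implies r (x ⊔ z) (y ⊔ z) for every z. -/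
/-- For a polymatroid function `h` on a lattice, the relation
`r x y ↔ h (x ⊔ y) = h x` satisfies Armstrong's axioms:
reflexivity, transitivity and augmentation. -/
theorem polymatroid_dependence_armstrong {L : Type*} [Lattice L] (h : L → ℝ)
    (h0 : ∀ x, 0 ≤ h x)
    (hmono : ∀ x y, x ≤ y → h x ≤ h y)
    (hsub : ∀ x y, h (x ⊔ y) + h (x ⊓ y) ≤ h x + h y)
    (r : L → L → Prop) (hr : ∀ x y, r x y ↔ h (x ⊔ y) = h x) :
    (∀ x y, y ≤ x → r x y) ∧
    (∀ x y z, r x y → r y z → r x z) ∧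
    (∀ x y z, r x y → r (x ⊔ z) (y ⊔ z)) := by
  refine ⟨fun x y hyx => ?_, fun x y z hxy hyz => ?_, fun x y z hxy => ?_⟩
  · rw [hr, sup_eq_left.mpr hyx]
  · rw [hr] at hxy hyz ⊢
    have key : h (x ⊔ y ⊔ (y ⊔ z)) ≤ h x := by
      have := hsub (x ⊔ y) (y ⊔ z)
      have hm : h y ≤ h ((x ⊔ y) ⊓ (y ⊔ z)) :=
        hmono _ _ (le_inf le_sup_right le_sup_left)
      linarith [hxy, hyz]
    have h1 : h (x ⊔ z) ≤ h (x ⊔ y ⊔ (y ⊔ z)) :=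
      hmono _ _ (sup_le (le_sup_of_le_left le_sup_left) (le_sup_of_le_right le_sup_right))
    have h2 : h x ≤ h (x ⊔ z) := hmono _ _ le_sup_left
    linarith
  · rw [hr] at hxy ⊢
    have key : h (x ⊔ y ⊔ (x ⊔ z)) ≤ h (x ⊔ z) := by
      have := hsub (x ⊔ y) (x ⊔ z)
      have hm : h x ≤ h ((x ⊔ y) ⊓ (x ⊔ z)) :=
        hmono _ _ (le_inf le_sup_left le_sup_left)
      linarith [hxy]
    have heq : x ⊔ z ⊔ (y ⊔ z) = x ⊔ y ⊔ (x ⊔ z) := by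
      apply le_antisymm
      · exact sup_le (le_sup_right) (sup_le (le_sup_of_le_left le_sup_right)
          (le_sup_of_le_right le_sup_right))
      · exact sup_le (sup_le (le_sup_of_le_left le_sup_left)
          (le_sup_of_le_right le_sup_left)) le_sup_left
    have h2 : h (x ⊔ z) ≤ h (x ⊔ z ⊔ (y ⊔ z)) := hmono _ _ le_sup_left
    rw [heq] at h2 ⊢
    linarith
end

section
/- Let L be a finite distributive lattice of order dimension at most 2, i.e. assume there exist linear orders α and β and an injective map from L into α × β preserving the lattice operations ⊓ and ⊔. Let h be an extreme point of the convex set of normalized polymatroid functions on L, namely the set of g : L → ℝ that are nonnegative, monotone, submodular, and satisfy g ⊤ = 1. Then h takes only the values 0 and 1: for every x ∈ L, h x = 0 or h x = 1. -/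
private lemma tele_sum (g : ℕ → ℝ) {a b : ℕ} (hab : a ≤ b) :
    ∑ i ∈ Finset.Ico a b, (g i - g (i + 1)) = g a - g b := by
  induction b, hab using Nat.le_induction with
  | base => simp
  | succ b hab ih =>
    rw [Finset.sum_Ico_succ_top (by omega), ih]
    ring

/-- On a finite distributive lattice of order dimension at most 2 (i.e. embeddable
as a sublattice of a product of two chains), every extreme point of the convex set
of normalized polymatroid functions takes only the values 0 and 1. -/
theorem extreme_polymatroid_two_dim {L α β : Type*} [DistribLattice L] [Finite L]
    [OrderTop L] [LinearOrder α] [LinearOrder β]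
    (f : L → α × β) (hinj : Function.Injective f)
    (hinf : ∀ x y : L, f (x ⊓ y) = f x ⊓ f y)
    (hsup : ∀ x y : L, f (x ⊔ y) = f x ⊔ f y)
    (h : L → ℝ)
    (hext : h ∈ Set.extremePoints ℝ
      {g : L → ℝ | (∀ x, 0 ≤ g x) ∧ (∀ x y, x ≤ y → g x ≤ g y) ∧
        (∀ x y, g (x ⊔ y) + g (x ⊓ y) ≤ g x + g y) ∧ g ⊤ = 1}) :
    ∀ x : L, h x = 0 ∨ h x = 1 := by
  classical
  obtain ⟨hS, hEx⟩ := hext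
  obtain ⟨hh0, hhmono, hhsub, hhtop⟩ := hS
  haveI : Fintype L := Fintype.ofFinite L
  haveI : Nonempty L := ⟨⊤⟩
  have hh1 : ∀ x, h x ≤ 1 := fun x => hhtop ▸ hhmono x ⊤ le_top
  -- f is monotone and an order embedding
  have hfmono : Monotone f := by
    intro x y hxy
    have h1 : f x ⊓ f y = f x := by rw [← hinf, inf_eq_left.mpr hxy]
    exact inf_eq_left.mp h1
  have hfle : ∀ {x y : L}, f x ≤ f y → x ≤ y := by
    intro x y hxy
    have h1 : f (x ⊓ y) = f x := by rw [hinf, inf_eq_left.mpr hxy]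
    exact inf_eq_left.mp (hinj h1)
  -- coordinate finsets
  set A : Finset α := Finset.image (fun x : L => (f x).1) Finset.univ with hA
  set B : Finset β := Finset.image (fun x : L => (f x).2) Finset.univ with hB
  have hmemA : ∀ x : L, (f x).1 ∈ A := fun x => Finset.mem_image.mpr ⟨x, Finset.mem_univ _, rfl⟩
  have hmemB : ∀ x : L, (f x).2 ∈ B := fun x => Finset.mem_image.mpr ⟨x, Finset.mem_univ _, rfl⟩
  have hmaxA : ∀ a ∈ A, a ≤ (f ⊤).1 := by
    intro a ha
    obtain ⟨x, -, rfl⟩ := Finset.mem_image.mp ha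
    exact (Prod.le_def.mp (hfmono le_top)).1
  have hmaxB : ∀ b ∈ B, b ≤ (f ⊤).2 := by
    intro b hb
    obtain ⟨x, -, rfl⟩ := Finset.mem_image.mp hb
    exact (Prod.le_def.mp (hfmono le_top)).2
  set m := A.card with hm
  set n := B.card with hn
  set e : Fin m ≃o A := A.orderIsoOfFin hm.symm with he
  set e' : Fin n ≃o B := B.orderIsoOfFin hn.symm with he'
  set cc : ℕ → α := fun i => if hi : i < m then (e ⟨i, hi⟩ : α) else (f ⊤).1 with hcc
  set dd : ℕ → β := fun j => if hj : j < n then (e' ⟨j, hj⟩ : β) else (f ⊤).2 with hdd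
  have hccmem : ∀ i, cc i ∈ A := by
    intro i; simp only [hcc]; split
    · exact (e _).2
    · exact hmemA ⊤
  have hddmem : ∀ j, dd j ∈ B := by
    intro j; simp only [hdd]; split
    · exact (e' _).2
    · exact hmemB ⊤
  have hcctop : ∀ i, cc i ≤ (f ⊤).1 := fun i => hmaxA _ (hccmem i)
  have hddtop : ∀ j, dd j ≤ (f ⊤).2 := fun j => hmaxB _ (hddmem j)
  have hccmono : ∀ {i j : ℕ}, i ≤ j → cc i ≤ cc j := by
    intro i j hij
    by_cases hj : j < m
    · have hi : i < m := by omega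
      simp only [hcc, dif_pos hi, dif_pos hj]
      exact Subtype.coe_le_coe.mpr (e.monotone (Fin.mk_le_mk.mpr hij))
    · calc cc i ≤ (f ⊤).1 := hcctop i
        _ = cc j := by simp only [hcc, dif_neg hj]
  have hddmono : ∀ {i j : ℕ}, i ≤ j → dd i ≤ dd j := by
    intro i j hij
    by_cases hj : j < n
    · have hi : i < n := by omega
      simp only [hdd, dif_pos hi, dif_pos hj]
      exact Subtype.coe_le_coe.mpr (e'.monotone (Fin.mk_le_mk.mpr hij))
    · calc dd i ≤ (f ⊤).2 := hddtop i
        _ = dd j := by simp only [hdd, dif_neg hj]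
  have hccstrict : ∀ {i j : ℕ}, i < j → j < m → cc i < cc j := by
    intro i j hij hj
    have hi : i < m := by omega
    simp only [hcc, dif_pos hi, dif_pos hj]
    exact Subtype.coe_lt_coe.mpr (e.strictMono (Fin.mk_lt_mk.mpr hij))
  have hddstrict : ∀ {i j : ℕ}, i < j → j < n → dd i < dd j := by
    intro i j hij hj
    have hi : i < n := by omega
    simp only [hdd, dif_pos hi, dif_pos hj]
    exact Subtype.coe_lt_coe.mpr (e'.strictMono (Fin.mk_lt_mk.mpr hij))
  have hgridtop : ∀ i j, (cc i, dd j) ≤ f ⊤ := fun i j => Prod.le_def.mpr ⟨hcctop i, hddtop j⟩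
  -- the "round up into L" map
  set pii : α × β → L :=
    fun p => Finset.inf' Finset.univ Finset.univ_nonempty
      (fun x : L => if p ≤ f x then x else ⊤) with hpii
  have hpile : ∀ (p : α × β) (x : L), p ≤ f x → pii p ≤ x := by
    intro p x hpx
    have h1 := Finset.inf'_le (s := (Finset.univ : Finset L))
      (fun x : L => if p ≤ f x then x else ⊤) (Finset.mem_univ x)
    simpa [hpii, hpx] using h1
  have hpispec : ∀ p : α × β, p ≤ f ⊤ → p ≤ f (pii p) := by
    intro p hp
    have h1 : pii p ∈ {z : L | p ≤ f z} := by
      rw [hpii]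
      refine Finset.inf'_mem {z : L | p ≤ f z} ?_ _ _ _ ?_
      · intro x hx y hy
        simp only [Set.mem_setOf_eq] at *
        rw [hinf]; exact le_inf hx hy
      · intro x _
        simp only [Set.mem_setOf_eq]
        split
        · assumption
        · exact hp
    exact h1
  have hpif : ∀ x : L, pii (f x) = x := by
    intro x
    exact le_antisymm (hpile _ x le_rfl) (hfle (hpispec (f x) (hfmono le_top)))
  have hpimono : ∀ {p q : α × β}, p ≤ q → q ≤ f ⊤ → pii p ≤ pii q := by
    intro p q hpq hq
    exact hpile p _ (le_trans hpq (hpispec q hq))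
  -- grid values and mixed differences
  set Q : ℕ → ℕ → ℝ := fun i j => if i < m ∧ j < n then h (pii (cc i, dd j)) else 1 with hQ
  set lam : ℕ → ℕ → ℝ :=
    fun i j => Q i (j + 1) + Q (i + 1) j - Q i j - Q (i + 1) (j + 1) with hlam
  have hQout : ∀ i j, ¬(i < m ∧ j < n) → Q i j = 1 := by
    intro i j hij; simp only [hQ, if_neg hij]
  have hQin : ∀ i j (hij : i < m ∧ j < n), Q i j = h (pii (cc i, dd j)) := by
    intro i j hij; simp only [hQ, if_pos hij]
  have hQ0 : ∀ i j, 0 ≤ Q i j := by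
    intro i j; simp only [hQ]; split
    · exact hh0 _
    · norm_num
  have hQle1 : ∀ i j, Q i j ≤ 1 := by
    intro i j; simp only [hQ]; split
    · exact hh1 _
    · norm_num
  have hQmono : ∀ {i j i' j' : ℕ}, i ≤ i' → j ≤ j' → Q i j ≤ Q i' j' := by
    intro i j i' j' hi hj
    by_cases hij' : i' < m ∧ j' < n
    · have hij : i < m ∧ j < n := ⟨by omega, by omega⟩
      rw [hQin _ _ hij, hQin _ _ hij']
      exact hhmono _ _ (hpimono (Prod.le_def.mpr ⟨hccmono hi, hddmono hj⟩) (hgridtop _ _))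
    · rw [hQout _ _ hij']
      exact hQle1 i j
  have hlam0 : ∀ i j, 0 ≤ lam i j := by
    intro i j
    simp only [hlam]
    by_cases him : i < m
    · by_cases hjn : j < n
      · by_cases hi1 : i + 1 < m
        · by_cases hj1 : j + 1 < n
          · -- interior case: submodularity
            rw [hQin _ _ ⟨him, hj1⟩, hQin _ _ ⟨hi1, hjn⟩, hQin _ _ ⟨him, hjn⟩,
              hQin _ _ ⟨hi1, hj1⟩]
            set x := pii (cc i, dd (j + 1)) with hx
            set y := pii (cc (i + 1), dd j) with hy
            have hfx : (cc i, dd (j + 1)) ≤ f x := hpispec _ (hgridtop _ _)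
            have hfy : (cc (i + 1), dd j) ≤ f y := hpispec _ (hgridtop _ _)
            have h1 : pii (cc (i + 1), dd (j + 1)) ≤ x ⊔ y := by
              apply hpile
              rw [hsup, Prod.le_def]
              constructor
              · exact le_trans (Prod.le_def.mp hfy).1 (Prod.le_def.mp (le_sup_right (a := f x))).1
              · exact le_trans (Prod.le_def.mp hfx).2 (Prod.le_def.mp (le_sup_left (b := f y))).2
            have h2 : pii (cc i, dd j) ≤ x ⊓ y := by
              refine le_inf (hpile _ _ ?_) (hpile _ _ ?_)
              · exact le_trans (b := (cc i, dd (j + 1)))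
                  (Prod.le_def.mpr ⟨le_rfl, hddmono (Nat.le_succ j)⟩) hfx
              · exact le_trans (b := (cc (i + 1), dd j))
                  (Prod.le_def.mpr ⟨hccmono (Nat.le_succ i), le_rfl⟩) hfy
            have h3 := hhsub x y
            have h4 := hhmono _ _ h1
            have h5 := hhmono _ _ h2
            linarith
          · -- j+1 ≥ n
            rw [hQout (i + 1) (j + 1) (by omega), hQout i (j + 1) (by omega)]
            have := hQmono (le_refl i) (Nat.le_succ j)
            have h6 : Q i j ≤ Q (i+1) j := hQmono (Nat.le_succ i) (le_refl j)
            linarith [hQle1 i j, hQmono (i := i) (j := j) (i' := i+1) (j' := j) (Nat.le_succ i) (le_refl j)]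
        · by_cases hj1 : j + 1 < n
          · rw [hQout (i + 1) j (by omega), hQout (i + 1) (j + 1) (by omega)]
            have := hQmono (i := i) (j := j) (i' := i) (j' := j + 1) (le_refl i) (Nat.le_succ j)
            linarith
          · rw [hQout (i + 1) j (by omega), hQout (i + 1) (j + 1) (by omega),
              hQout i (j + 1) (by omega)]
            linarith [hQle1 i j]
      · rw [hQout i j (by omega), hQout i (j + 1) (by omega), hQout (i + 1) j (by omega),
          hQout (i + 1) (j + 1) (by omega)]
        norm_num
    · rw [hQout i j (by omega), hQout i (j + 1) (by omega), hQout (i + 1) j (by omega),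
        hQout (i + 1) (j + 1) (by omega)]
      norm_num
  -- telescoping sums
  have hcol : ∀ (i J : ℕ), J ≤ n → ∑ j ∈ Finset.Ico J n, lam i j = Q (i + 1) J - Q i J := by
    intro i J hJ
    have h1 : ∀ j ∈ Finset.Ico J n, lam i j =
        (fun j => Q (i + 1) j - Q i j) j - (fun j => Q (i + 1) j - Q i j) (j + 1) := by
      intro j _
      simp only [hlam]; ring
    rw [Finset.sum_congr rfl h1, tele_sum _ hJ]
    rw [hQout (i + 1) n (by omega), hQout i n (by omega)]
    ring
  have hTOT : ∀ (I J : ℕ), I ≤ m → J ≤ n →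
      ∑ p ∈ Finset.Ico I m ×ˢ Finset.Ico J n, lam p.1 p.2 = 1 - Q I J := by
    intro I J hI hJ
    rw [Finset.sum_product]
    have h1 : ∀ i ∈ Finset.Ico I m, ∑ j ∈ Finset.Ico J n, lam i j =
        -((fun i => Q i J) i - (fun i => Q i J) (i + 1)) := by
      intro i _
      rw [hcol i J hJ]; ring
    rw [Finset.sum_congr rfl h1, Finset.sum_neg_distrib, tele_sum _ hI,
      hQout m J (by omega)]
    ring
  -- the 0-1 polymatroids
  set u : ℕ → ℕ → L → ℝ := fun i j x => if f x ≤ (cc i, dd j) then 0 else 1 with hu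
  have hu0 : ∀ i j x, 0 ≤ u i j x := by
    intro i j x; simp only [hu]; split <;> norm_num
  have hule1 : ∀ i j x, u i j x ≤ 1 := by
    intro i j x; simp only [hu]; split <;> norm_num
  have humono : ∀ (i j : ℕ) (x y : L), x ≤ y → u i j x ≤ u i j y := by
    intro i j x y hxy
    simp only [hu]
    by_cases hy : f y ≤ (cc i, dd j)
    · have hx : f x ≤ (cc i, dd j) := le_trans (hfmono hxy) hy
      rw [if_pos hx, if_pos hy]
    · rw [if_neg hy]
      split <;> norm_num
  have husub : ∀ (i j : ℕ) (x y : L),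
      u i j (x ⊔ y) + u i j (x ⊓ y) ≤ u i j x + u i j y := by
    intro i j x y
    simp only [hu]
    by_cases hx : f x ≤ (cc i, dd j) <;> by_cases hy : f y ≤ (cc i, dd j)
    · have hs : f (x ⊔ y) ≤ (cc i, dd j) := by rw [hsup]; exact sup_le hx hy
      have hi : f (x ⊓ y) ≤ (cc i, dd j) := by rw [hinf]; exact le_trans inf_le_left hx
      rw [if_pos hx, if_pos hy, if_pos hs, if_pos hi]
    · have hi : f (x ⊓ y) ≤ (cc i, dd j) := by rw [hinf]; exact le_trans inf_le_left hx
      rw [if_pos hx, if_neg hy, if_pos hi]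
      split <;> norm_num
    · have hi : f (x ⊓ y) ≤ (cc i, dd j) := by rw [hinf]; exact le_trans inf_le_right hy
      rw [if_neg hx, if_pos hy, if_pos hi]
      split <;> norm_num
    · rw [if_neg hx, if_neg hy]
      split <;> split <;> norm_num
  -- coordinates of lattice elements
  set Ix : L → ℕ := fun x => (e.symm ⟨(f x).1, hmemA x⟩ : Fin m) with hIx
  set Jx : L → ℕ := fun x => (e'.symm ⟨(f x).2, hmemB x⟩ : Fin n) with hJx
  have hIxlt : ∀ x, Ix x < m := fun x => (e.symm ⟨(f x).1, hmemA x⟩).2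
  have hJxlt : ∀ x, Jx x < n := fun x => (e'.symm ⟨(f x).2, hmemB x⟩).2
  have hccIx : ∀ x, cc (Ix x) = (f x).1 := by
    intro x
    simp only [hcc, dif_pos (hIxlt x)]
    have h1 : (⟨Ix x, hIxlt x⟩ : Fin m) = e.symm ⟨(f x).1, hmemA x⟩ := by
      simp only [hIx]
    rw [h1, OrderIso.apply_symm_apply]
  have hddJx : ∀ x, dd (Jx x) = (f x).2 := by
    intro x
    simp only [hdd, dif_pos (hJxlt x)]
    have h1 : (⟨Jx x, hJxlt x⟩ : Fin n) = e'.symm ⟨(f x).2, hmemB x⟩ := by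
      simp only [hJx]
    rw [h1, OrderIso.apply_symm_apply]
  have hIxle : ∀ (x : L) (i : ℕ), i < m → ((f x).1 ≤ cc i ↔ Ix x ≤ i) := by
    intro x i hi
    rw [← hccIx x]
    simp only [hcc, dif_pos (hIxlt x), dif_pos hi]
    rw [Subtype.coe_le_coe, e.le_iff_le, Fin.mk_le_mk]
  have hJxle : ∀ (x : L) (j : ℕ), j < n → ((f x).2 ≤ dd j ↔ Jx x ≤ j) := by
    intro x j hj
    rw [← hddJx x]
    simp only [hdd, dif_pos (hJxlt x), dif_pos hj]
    rw [Subtype.coe_le_coe, e'.le_iff_le, Fin.mk_le_mk]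
  have hQx : ∀ x : L, Q (Ix x) (Jx x) = h x := by
    intro x
    rw [hQin _ _ ⟨hIxlt x, hJxlt x⟩, hccIx, hddJx]
    rw [show ((f x).1, (f x).2) = f x from rfl, hpif]
  -- the master identity
  have key : ∀ x : L, h x = Q 0 0 +
      ∑ p ∈ Finset.range m ×ˢ Finset.range n, lam p.1 p.2 * u p.1 p.2 x := by
    intro x
    have hsplit : ∀ p ∈ Finset.range m ×ˢ Finset.range n,
        lam p.1 p.2 * u p.1 p.2 x =
          lam p.1 p.2 - (if Ix x ≤ p.1 ∧ Jx x ≤ p.2 then lam p.1 p.2 else 0) := by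
      rintro ⟨i, j⟩ hp
      rw [Finset.mem_product, Finset.mem_range, Finset.mem_range] at hp
      have hcond : (f x ≤ (cc i, dd j)) ↔ (Ix x ≤ i ∧ Jx x ≤ j) := by
        rw [Prod.le_def]
        exact and_congr (hIxle x i hp.1) (hJxle x j hp.2)
      simp only [hu]
      by_cases hc : f x ≤ (cc i, dd j)
      · rw [if_pos hc, if_pos (hcond.mp hc)]; ring
      · rw [if_neg hc, if_neg (fun hh => hc (hcond.mpr hh))]; ring
    rw [Finset.sum_congr rfl hsplit, Finset.sum_sub_distrib, ← Finset.sum_filter]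
    have hfilter : (Finset.range m ×ˢ Finset.range n).filter
        (fun p => Ix x ≤ p.1 ∧ Jx x ≤ p.2) =
        Finset.Ico (Ix x) m ×ˢ Finset.Ico (Jx x) n := by
      ext ⟨i, j⟩
      simp only [Finset.mem_filter, Finset.mem_product, Finset.mem_range, Finset.mem_Ico]
      omega
    rw [hfilter]
    have h1 : Finset.range m ×ˢ Finset.range n =
        Finset.Ico 0 m ×ˢ Finset.Ico 0 n := by
      rw [Finset.range_eq_Ico, Finset.range_eq_Ico]
    rw [h1, hTOT 0 0 (by omega) (by omega),
      hTOT (Ix x) (Jx x) (le_of_lt (hIxlt x)) (le_of_lt (hJxlt x)), hQx x]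
    ring
  -- total mass
  set grid := Finset.range m ×ˢ Finset.range n with hgrid
  clear_value grid u Jx Ix lam Q pii dd cc e' e n m B A
  -- final case analysis
  by_cases hall : ∀ p ∈ grid, lam p.1 p.2 = 0
  · intro x
    right
    have hx1 : ∀ y : L, h y = Q 0 0 := by
      intro y
      rw [key y, Finset.sum_eq_zero (fun p hp => by rw [hall p hp]; ring)]
      ring
    have := hx1 ⊤
    rw [hhtop] at this
    rw [hx1 x, ← this]
  · push_neg at hall
    obtain ⟨p0, hp0mem, hp0ne⟩ := hall
    have hp0 : p0.1 < m ∧ p0.2 < n := by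
      have := hp0mem
      rw [hgrid, Finset.mem_product, Finset.mem_range, Finset.mem_range] at this
      exact this
    set t := lam p0.1 p0.2 with ht'
    have ht : 0 < t := lt_of_le_of_ne (hlam0 _ _) (Ne.symm hp0ne)
    -- u p0 is normalized
    have hutop : u p0.1 p0.2 ⊤ = 1 := by
      simp only [hu]
      rw [if_neg]
      intro hle
      have h1 : cc p0.1 = (f ⊤).1 := le_antisymm (hcctop _) (Prod.le_def.mp hle).1
      have h2 : dd p0.2 = (f ⊤).2 := le_antisymm (hddtop _) (Prod.le_def.mp hle).2
      have hQp : Q p0.1 p0.2 = 1 := by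
        rw [hQin _ _ hp0, h1, h2, show ((f ⊤).1, (f ⊤).2) = f ⊤ from rfl, hpif, hhtop]
      have hi1 : ¬ (p0.1 + 1 < m) := by
        intro hlt
        have := hccstrict (Nat.lt_succ_self p0.1) hlt
        have h3 : cc (p0.1 + 1) ≤ (f ⊤).1 := hcctop _
        rw [← h1] at h3
        exact absurd h3 (not_le.mpr this)
      have hj1 : ¬ (p0.2 + 1 < n) := by
        intro hlt
        have := hddstrict (Nat.lt_succ_self p0.2) hlt
        have h3 : dd (p0.2 + 1) ≤ (f ⊤).2 := hddtop _
        rw [← h2] at h3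
        exact absurd h3 (not_le.mpr this)
      have hz : t = 0 := by
        simp only [ht', hlam]
        rw [hQout (p0.1 + 1) p0.2 (by omega), hQout p0.1 (p0.2 + 1) (by omega),
          hQout (p0.1 + 1) (p0.2 + 1) (by omega), hQp]
        ring
      exact absurd hz (ne_of_gt ht)
    -- u p0 belongs to the convex set
    have huS : (u p0.1 p0.2) ∈
        {g : L → ℝ | (∀ x, 0 ≤ g x) ∧ (∀ x y, x ≤ y → g x ≤ g y) ∧
          (∀ x y, g (x ⊔ y) + g (x ⊓ y) ≤ g x + g y) ∧ g ⊤ = 1} :=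
      ⟨hu0 _ _, humono _ _, husub _ _, hutop⟩
    -- basic comparison inequalities from the master identity
    have hlow : ∀ x : L, t * u p0.1 p0.2 x ≤ h x := by
      intro x
      have h1 : t * u p0.1 p0.2 x ≤
          ∑ p ∈ grid, lam p.1 p.2 * u p.1 p.2 x :=
        Finset.single_le_sum (f := fun p => lam p.1 p.2 * u p.1 p.2 x)
          (fun p _ => mul_nonneg (hlam0 _ _) (hu0 _ _ _)) hp0mem
      have h2 := key x
      have h3 := hQ0 0 0
      linarith
    have hdiffmono : ∀ x y : L, x ≤ y →
        t * (u p0.1 p0.2 y - u p0.1 p0.2 x) ≤ h y - h x := by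
      intro x y hxy
      have h1 : h y - h x = ∑ p ∈ grid, lam p.1 p.2 * (u p.1 p.2 y - u p.1 p.2 x) := by
        have hy := key y
        have hx := key x
        have h2 : ∑ p ∈ grid, lam p.1 p.2 * (u p.1 p.2 y - u p.1 p.2 x) =
            (∑ p ∈ grid, lam p.1 p.2 * u p.1 p.2 y) -
              (∑ p ∈ grid, lam p.1 p.2 * u p.1 p.2 x) := by
          rw [← Finset.sum_sub_distrib]
          exact Finset.sum_congr rfl (fun p _ => by ring)
        rw [h2, hy, hx]
        ring
      rw [h1]
      exact Finset.single_le_sum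
        (f := fun p => lam p.1 p.2 * (u p.1 p.2 y - u p.1 p.2 x))
        (fun p _ => mul_nonneg (hlam0 _ _) (by linarith [humono p.1 p.2 x y hxy])) hp0mem
    have hdiffsub : ∀ x y : L,
        t * (u p0.1 p0.2 x + u p0.1 p0.2 y - u p0.1 p0.2 (x ⊔ y) - u p0.1 p0.2 (x ⊓ y)) ≤
          h x + h y - h (x ⊔ y) - h (x ⊓ y) := by
      intro x y
      have h1 : h x + h y - h (x ⊔ y) - h (x ⊓ y) =
          ∑ p ∈ grid, lam p.1 p.2 *
            (u p.1 p.2 x + u p.1 p.2 y - u p.1 p.2 (x ⊔ y) - u p.1 p.2 (x ⊓ y)) := by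
        have ha := key x
        have hb := key y
        have hc := key (x ⊔ y)
        have hd := key (x ⊓ y)
        have h2 : ∑ p ∈ grid, lam p.1 p.2 *
            (u p.1 p.2 x + u p.1 p.2 y - u p.1 p.2 (x ⊔ y) - u p.1 p.2 (x ⊓ y)) =
            (∑ p ∈ grid, lam p.1 p.2 * u p.1 p.2 x) +
              (∑ p ∈ grid, lam p.1 p.2 * u p.1 p.2 y) -
              (∑ p ∈ grid, lam p.1 p.2 * u p.1 p.2 (x ⊔ y)) -
              (∑ p ∈ grid, lam p.1 p.2 * u p.1 p.2 (x ⊓ y)) := by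
          rw [← Finset.sum_add_distrib, ← Finset.sum_sub_distrib, ← Finset.sum_sub_distrib]
          exact Finset.sum_congr rfl (fun p _ => by ring)
        rw [h2, ha, hb, hc, hd]
        ring
      rw [h1]
      exact Finset.single_le_sum
        (f := fun p => lam p.1 p.2 *
          (u p.1 p.2 x + u p.1 p.2 y - u p.1 p.2 (x ⊔ y) - u p.1 p.2 (x ⊓ y)))
        (fun p _ => mul_nonneg (hlam0 _ _) (by linarith [husub p.1 p.2 x y])) hp0mem
    -- t ≤ 1
    have htsum : ∑ p ∈ grid, lam p.1 p.2 = 1 - Q 0 0 := by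
      have h1 : grid = Finset.Ico 0 m ×ˢ Finset.Ico 0 n := by
        rw [hgrid, Finset.range_eq_Ico, Finset.range_eq_Ico]
      rw [h1]
      exact hTOT 0 0 (by omega) (by omega)
    have htle1 : t ≤ 1 := by
      have h1 : t ≤ ∑ p ∈ grid, lam p.1 p.2 :=
        Finset.single_le_sum (f := fun p => lam p.1 p.2) (fun p _ => hlam0 _ _) hp0mem
      have h2 := hQ0 0 0
      linarith
    rcases eq_or_lt_of_le htle1 with ht1 | ht1
    · -- t = 1 : all other weights vanish and h = u p0
      have hQ00 : Q 0 0 = 0 := by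
        have h1 : t ≤ ∑ p ∈ grid, lam p.1 p.2 :=
          Finset.single_le_sum (f := fun p => lam p.1 p.2) (fun p _ => hlam0 _ _) hp0mem
        have h2 := hQ0 0 0
        linarith [htsum]
      have hrest : ∀ p ∈ grid, p ≠ p0 → lam p.1 p.2 = 0 := by
        intro p hp hne
        have h1 : ∑ q ∈ grid.erase p0, lam q.1 q.2 = 0 := by
          rw [Finset.sum_erase_eq_sub hp0mem, htsum, hQ00, ← ht', ht1]
          ring
        have h2 := (Finset.sum_eq_zero_iff_of_nonneg
          (fun q _ => hlam0 q.1 q.2)).mp h1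
        exact h2 p (Finset.mem_erase.mpr ⟨hne, hp⟩)
      intro x
      have hx : h x = u p0.1 p0.2 x := by
        have h1 := key x
        rw [h1, hQ00,
          Finset.sum_eq_single_of_mem p0 hp0mem
            (fun q hq hne => by rw [hrest q hq hne]; ring), ← ht', ht1]
        ring
      rw [hx]
      simp only [hu]
      split
      · left; rfl
      · right; rfl
    · -- 0 < t < 1 : write h as a proper convex combination
      set w : L → ℝ := fun x => (h x - t * u p0.1 p0.2 x) / (1 - t) with hw
      have htpos : (0:ℝ) < 1 - t := by linarith
      have hwS : w ∈
          {g : L → ℝ | (∀ x, 0 ≤ g x) ∧ (∀ x y, x ≤ y → g x ≤ g y) ∧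
            (∀ x y, g (x ⊔ y) + g (x ⊓ y) ≤ g x + g y) ∧ g ⊤ = 1} := by
        refine ⟨?_, ?_, ?_, ?_⟩
        · intro x
          simp only [hw]
          apply div_nonneg _ (le_of_lt htpos)
          linarith [hlow x]
        · intro x y hxy
          simp only [hw]
          rw [div_le_div_iff₀ htpos htpos]
          have := hdiffmono x y hxy
          nlinarith
        · intro x y
          simp only [hw]
          rw [← add_div, ← add_div, div_le_div_iff₀ htpos htpos]
          have := hdiffsub x y
          nlinarith
        · simp only [hw]
          rw [hhtop, hutop]
          field_simp
      have hseg : h ∈ openSegment ℝ (u p0.1 p0.2) w := by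
        refine ⟨t, 1 - t, ht, htpos, by ring, ?_⟩
        funext x
        simp only [Pi.add_apply, Pi.smul_apply, smul_eq_mul, hw]
        field_simp
        ring
      have h1 := hEx huS hwS hseg
      intro x
      rw [← h1]
      simp only [hu]
      split
      · left; rfl
      · right; rfl
end
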